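/- arXiv:math/0303279 — 4 statements merged into one kernel-verified Lean document; each statement's English description precedes it below -/
import Mathlib

section
/- The Lehmer constant of the cyclic group of order 3 is λ(ℤ/3ℤ) = (1/3) log 2. -/
open Finset

/-- `f` is a finite integer-coefficient linear combination of characters of the
(discrete) abelian group `G`. -/
def IsAddCharComb (G : Type*) [AddCommGroup G] (f : G → ℂ) : Prop :=
  ∃ (s : Finset (AddChar G Circle)) (c : AddChar G Circle → ℤ),
    f = fun x => ∑ χ ∈ s, (c χ : ℂ) * (χ x : ℂ)

/-- The logarithmic Mahler measure of `f` over a finite group, computed with respect to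
the normalized (uniform) Haar probability measure. -/
noncomputable def logMahler {G : Type*} [Fintype G] (f : G → ℂ) : ℝ :=
  (1 / (Fintype.card G : ℝ)) * ∑ x, Real.log ‖f x‖

/-- The Lehmer constant of a finite abelian group. -/
noncomputable def lehmer (G : Type*) [AddCommGroup G] [Fintype G] : ℝ :=
  sInf {r : ℝ | ∃ f : G → ℂ, IsAddCharComb G f ∧ logMahler f = r ∧ 0 < r}

/-! ### Auxiliary material: the primitive cube root of unity -/

noncomputable def ω3 : ℂ := -1/2 + (Real.sqrt 3 : ℂ)/2 * Complex.I

lemma sqrt3_sq : ((Real.sqrt 3 : ℝ) : ℂ)^2 = 3 := by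
  rw [← Complex.ofReal_pow, Real.sq_sqrt (by norm_num : (3:ℝ) ≥ 0)]
  norm_num

lemma ω3_rel : ω3^2 + ω3 + 1 = 0 := by
  unfold ω3
  linear_combination (Complex.I^2/4) * sqrt3_sq + (3/4 : ℂ) * Complex.I_sq

lemma ω3_cube : ω3^3 = 1 := by linear_combination (ω3 - 1) * ω3_rel

lemma ω3_im : ω3.im = Real.sqrt 3 / 2 := by
  simp [ω3]

lemma ω3_ne_one : ω3 ≠ 1 := by
  intro h
  have h1 := ω3_im
  rw [h] at h1
  simp at h1
  have h2 : Real.sqrt 3 > 0 := Real.sqrt_pos.mpr (by norm_num)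
  linarith

lemma ω3_conj : (starRingEnd ℂ) ω3 = ω3^2 := by
  have h2 : ω3^2 = -1 - ω3 := by linear_combination ω3_rel
  rw [h2]
  unfold ω3
  simp [map_add, map_mul, map_div₀, Complex.conj_I, Complex.conj_ofReal, map_ofNat]
  ring

lemma cube_roots (ζ : ℂ) (h : ζ^3 = 1) : ζ = 1 ∨ ζ = ω3 ∨ ζ = ω3^2 := by
  have key : (ζ - 1) * ((ζ - ω3) * (ζ - ω3^2)) = 0 := by
    linear_combination h + (ζ - ζ^2) * ω3_rel + (ζ - 1) * ω3_cube
  rcases mul_eq_zero.mp key with h1 | h1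
  · exact Or.inl (sub_eq_zero.mp h1)
  · rcases mul_eq_zero.mp h1 with h2 | h2
    · exact Or.inr (Or.inl (sub_eq_zero.mp h2))
    · exact Or.inr (Or.inr (sub_eq_zero.mp h2))

/-! ### Characters of `ZMod 3` -/

lemma circle_coe_pow (z : Circle) (n : ℕ) : ((z ^ n : Circle) : ℂ) = (z : ℂ)^n := rfl

lemma char_pow (χ : AddChar (ZMod 3) Circle) (x : ZMod 3) :
    (χ x : ℂ) = (χ 1 : ℂ) ^ x.val := by
  have hx : χ x = χ (x.val • (1 : ZMod 3)) := by
    congr 1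
    rw [nsmul_eq_mul, mul_one, ZMod.natCast_val, ZMod.cast_id]
  rw [hx, AddChar.map_nsmul_eq_pow, circle_coe_pow]

lemma char_one_cube (χ : AddChar (ZMod 3) Circle) : ((χ 1 : ℂ))^3 = 1 := by
  have h : ((3:ℕ) • (1 : ZMod 3)) = 0 := by decide
  have h2 := AddChar.map_nsmul_eq_pow χ 3 1
  rw [h, AddChar.map_zero_eq_one] at h2
  rw [← circle_coe_pow, ← h2]
  simp

lemma decomp (s : Finset (AddChar (ZMod 3) Circle)) (c : AddChar (ZMod 3) Circle → ℤ) :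
    ∃ A B C : ℤ, ∀ x : ZMod 3,
      ∑ χ ∈ s, (c χ : ℂ) * (χ x : ℂ)
        = (A:ℂ) + (B:ℂ) * ω3 ^ x.val + (C:ℂ) * (ω3^2) ^ x.val := by
  classical
  induction s using Finset.induction_on with
  | empty => exact ⟨0, 0, 0, fun x => by simp⟩
  | @insert χ s hχ ih =>
    obtain ⟨A, B, C, h⟩ := ih
    rcases cube_roots _ (char_one_cube χ) with h1 | h1 | h1
    · refine ⟨A + c χ, B, C, fun x => ?_⟩
      rw [Finset.sum_insert hχ, h, char_pow, h1]
      push_cast; ring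
    · refine ⟨A, B + c χ, C, fun x => ?_⟩
      rw [Finset.sum_insert hχ, h, char_pow, h1]
      push_cast; ring
    · refine ⟨A, B, C + c χ, fun x => ?_⟩
      rw [Finset.sum_insert hχ, h, char_pow, h1]
      push_cast; ring

/-! ### The key arithmetic lemma -/

lemma abs_intCast' (n : ℤ) : ‖(n : ℂ)‖ = (n.natAbs : ℝ) := by
  rw [Complex.norm_intCast, Nat.cast_natAbs]; push_cast; ring

lemma sum_log_eq (f : ZMod 3 → ℂ) (hf : IsAddCharComb (ZMod 3) f) :
    ∃ n : ℕ, ∑ x : ZMod 3, Real.log (‖f x‖) = Real.log n := by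
  obtain ⟨s, c, hfeq⟩ := hf
  obtain ⟨A, B, C, hdec⟩ := decomp s c
  have hdec' : ∀ x : ZMod 3, f x = (A:ℂ) + (B:ℂ) * ω3 ^ x.val + (C:ℂ) * (ω3^2) ^ x.val := by
    intro x; rw [hfeq]; exact hdec x
  have hu : f 0 = ((A + B + C : ℤ) : ℂ) := by
    rw [hdec' 0]; push_cast; norm_num
  have hv : f 1 = (A:ℂ) + (B:ℂ) * ω3 + (C:ℂ) * ω3^2 := by
    rw [hdec' 1, show (1 : ZMod 3).val = 1 from rfl]; ring
  have hw : f 2 = (A:ℂ) + (B:ℂ) * ω3^2 + (C:ℂ) * (ω3^2)^2 := by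
    rw [hdec' 2, show (2 : ZMod 3).val = 2 from rfl]
  have hwv : f 2 = (starRingEnd ℂ) (f 1) := by
    rw [hv, hw]
    simp only [map_add, map_mul, map_pow, map_intCast, ω3_conj]
  have hsum : ∑ x : ZMod 3, Real.log (‖f x‖)
      = Real.log (‖f 0‖) + Real.log (‖f 1‖)
        + Real.log (‖f 2‖) :=
    Fin.sum_univ_three _
  have habs_w : ‖f 2‖ = ‖f 1‖ := by rw [hwv]; exact Complex.norm_conj _
  by_cases hv0 : f 1 = 0
  · -- then f 2 = 0 as well, only f 0 contributes
    have hw0 : f 2 = 0 := by rw [hwv, hv0, map_zero]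
    refine ⟨(A + B + C).natAbs, ?_⟩
    rw [hsum, hv0, hw0, hu, abs_intCast']
    simp
  · by_cases hu0 : f 0 = 0
    · -- f 1 * f 2 is a positive integer
      refine ⟨(A^2 + B^2 + C^2 - A*B - A*C - B*C).natAbs, ?_⟩
      have hprod : f 1 * f 2 = ((A^2 + B^2 + C^2 - A*B - A*C - B*C : ℤ) : ℂ) := by
        rw [hv, hw]; push_cast
        linear_combination ((C:ℂ)^2 + (C:ℂ)^2*ω3^3 + (B:ℂ)*(C:ℂ)*ω3 + (B:ℂ)*(C:ℂ)*ω3^2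
            + (B:ℂ)^2 + (A:ℂ)*(C:ℂ)*ω3) * ω3_cube
          + ((B:ℂ)*(C:ℂ) + (A:ℂ)*(C:ℂ) + (A:ℂ)*(B:ℂ)) * ω3_rel
      have hw0 : f 2 ≠ 0 := by rw [hwv]; simpa using hv0
      have hav : ‖f 1‖ ≠ 0 := by simpa using hv0
      have haw : ‖f 2‖ ≠ 0 := by simpa using hw0
      rw [hsum, hu0]
      simp only [norm_zero, Real.log_zero, zero_add]
      rw [← Real.log_mul hav haw, ← norm_mul, hprod, abs_intCast']
    · -- all three nonzero
      refine ⟨(A^3 + B^3 + C^3 - 3*A*B*C).natAbs, ?_⟩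
      have hprod : f 0 * f 1 * f 2 = ((A^3 + B^3 + C^3 - 3*A*B*C : ℤ) : ℂ) := by
        rw [hu, hv, hw]; push_cast
        linear_combination ((C:ℂ)^3 + (C:ℂ)^3*ω3^3 + (B:ℂ)*(C:ℂ)^2 + (B:ℂ)*(C:ℂ)^2*ω3
            + (B:ℂ)*(C:ℂ)^2*ω3^2 + (B:ℂ)*(C:ℂ)^2*ω3^3 + (B:ℂ)^2*(C:ℂ) + (B:ℂ)^2*(C:ℂ)*ω3
            + (B:ℂ)^2*(C:ℂ)*ω3^2 + (B:ℂ)^3 + (A:ℂ)*(C:ℂ)^2 + (A:ℂ)*(C:ℂ)^2*ω3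
            + (A:ℂ)*(C:ℂ)^2*ω3^3 + 2*(A:ℂ)*(B:ℂ)*(C:ℂ)*ω3 + (A:ℂ)*(B:ℂ)*(C:ℂ)*ω3^2
            + (A:ℂ)*(B:ℂ)^2 + (A:ℂ)^2*(C:ℂ)*ω3) * ω3_cube
          + ((B:ℂ)*(C:ℂ)^2 + (B:ℂ)^2*(C:ℂ) + (A:ℂ)*(C:ℂ)^2 + 3*(A:ℂ)*(B:ℂ)*(C:ℂ)
            + (A:ℂ)*(B:ℂ)^2 + (A:ℂ)^2*(C:ℂ) + (A:ℂ)^2*(B:ℂ)) * ω3_rel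
      have hw0 : f 2 ≠ 0 := by rw [hwv]; simpa using hv0
      have hau : ‖f 0‖ ≠ 0 := by simpa using hu0
      have hav : ‖f 1‖ ≠ 0 := by simpa using hv0
      have haw : ‖f 2‖ ≠ 0 := by simpa using hw0
      rw [hsum, ← Real.log_mul hau hav, ← Real.log_mul (mul_ne_zero hau hav) haw,
        ← norm_mul, ← norm_mul, hprod, abs_intCast']

/-! ### The witness -/

lemma hpsi_one : ((ZMod.toCircle (1 : ZMod 3) : Circle) : ℂ) = ω3 := by
  have h1 : ((1 : ZMod 3)) = ((1 : ℤ) : ZMod 3) := by norm_num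
  rw [h1, ZMod.toCircle_intCast]
  have h2 : (2 * (Real.pi : ℂ) * Complex.I * (1:ℤ) / (3:ℕ) : ℂ)
      = ((2 * Real.pi / 3 : ℝ) : ℂ) * Complex.I := by push_cast; ring
  rw [h2, Complex.exp_mul_I, ← Complex.ofReal_cos, ← Complex.ofReal_sin]
  have h3 : (2 * Real.pi / 3 : ℝ) = Real.pi - Real.pi / 3 := by ring
  rw [h3, Real.cos_pi_sub, Real.sin_pi_sub, Real.cos_pi_div_three, Real.sin_pi_div_three]
  unfold ω3
  push_cast
  ring

lemma witness_comb :
    IsAddCharComb (ZMod 3)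
      (fun x => ∑ χ ∈ ({1, ZMod.toCircle} : Finset (AddChar (ZMod 3) Circle)),
        ((1 : ℤ) : ℂ) * (χ x : ℂ)) :=
  ⟨{1, ZMod.toCircle}, fun _ => 1, rfl⟩

lemma psi_ne_one : (1 : AddChar (ZMod 3) Circle) ≠ ZMod.toCircle := by
  intro h
  apply ω3_ne_one
  rw [← hpsi_one, ← h]
  simp [AddChar.one_apply]

lemma abs_one_add_ω3 : ‖1 + ω3‖ = 1 := by
  have hc : (starRingEnd ℂ) (1 + ω3) = 1 + ω3^2 := by
    rw [map_add, map_one, ω3_conj]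
  have hn : (1 + ω3) * (starRingEnd ℂ) (1 + ω3) = 1 := by
    rw [hc]; linear_combination ω3_rel + ω3_cube
  rw [Complex.mul_conj] at hn
  have hn' : Complex.normSq (1 + ω3) = 1 := by exact_mod_cast hn
  rw [Complex.norm_def, hn', Real.sqrt_one]

lemma witness_logMahler :
    logMahler (fun x : ZMod 3 => ∑ χ ∈ ({1, ZMod.toCircle} : Finset (AddChar (ZMod 3) Circle)),
        ((1 : ℤ) : ℂ) * (χ x : ℂ)) = (1/3) * Real.log 2 := by
  set ψ : AddChar (ZMod 3) Circle := ZMod.toCircle with hψ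
  have hf : ∀ x : ZMod 3, ∑ χ ∈ ({1, ψ} : Finset (AddChar (ZMod 3) Circle)),
      ((1 : ℤ) : ℂ) * (χ x : ℂ) = 1 + (ψ x : ℂ) := by
    intro x
    rw [Finset.sum_pair psi_ne_one]
    simp [AddChar.one_apply]
    rfl
  unfold logMahler
  rw [show (Fintype.card (ZMod 3) : ℝ) = 3 by simp]
  have hsum : ∑ x : ZMod 3, Real.log (‖∑ χ ∈ ({1, ψ} : Finset (AddChar (ZMod 3) Circle)),
      ((1 : ℤ) : ℂ) * (χ x : ℂ)‖) = Real.log 2 := by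
    have hexp : ∑ x : ZMod 3, Real.log (‖∑ χ ∈ ({1, ψ} : Finset (AddChar (ZMod 3) Circle)),
        ((1 : ℤ) : ℂ) * (χ x : ℂ)‖)
        = Real.log (‖∑ χ ∈ ({1, ψ} : Finset (AddChar (ZMod 3) Circle)),
            ((1 : ℤ) : ℂ) * (χ (0 : ZMod 3) : ℂ)‖)
          + Real.log (‖∑ χ ∈ ({1, ψ} : Finset (AddChar (ZMod 3) Circle)),
            ((1 : ℤ) : ℂ) * (χ (1 : ZMod 3) : ℂ)‖)
          + Real.log (‖∑ χ ∈ ({1, ψ} : Finset (AddChar (ZMod 3) Circle)),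
            ((1 : ℤ) : ℂ) * (χ (2 : ZMod 3) : ℂ)‖) := Fin.sum_univ_three _
    rw [hexp, hf 0, hf 1, hf 2]
    have h0 : ((ψ (0 : ZMod 3) : Circle) : ℂ) = 1 := by
      rw [AddChar.map_zero_eq_one]; rfl
    have h1 : ((ψ (1 : ZMod 3) : Circle) : ℂ) = ω3 := hpsi_one
    have h2 : ((ψ (2 : ZMod 3) : Circle) : ℂ) = ω3^2 := by
      have : (2 : ZMod 3) = 1 + 1 := by decide
      rw [this, AddChar.map_add_eq_mul]
      show ((ψ 1 : Circle) : ℂ) * ((ψ 1 : Circle) : ℂ) = ω3^2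
      rw [h1]; ring
    rw [h0, h1, h2]
    have habs2 : ‖1 + (1:ℂ)‖ = 2 := by norm_num
    have hconj : (1 : ℂ) + ω3^2 = (starRingEnd ℂ) (1 + ω3) := by
      rw [map_add, map_one, ω3_conj]
    rw [habs2, abs_one_add_ω3, hconj, Complex.norm_conj, abs_one_add_ω3]
    simp
  rw [hsum]

/-- Example 4.2: the Lehmer constant of `ℤ/3ℤ` is `(1/3) log 2`. -/
theorem lehmer_zmod_three : lehmer (ZMod 3) = (1 / 3) * Real.log 2 := by
  unfold lehmer
  have hpos : (0:ℝ) < (1/3) * Real.log 2 := by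
    have := Real.log_pos (by norm_num : (1:ℝ) < 2)
    positivity
  have hmem : (1/3) * Real.log 2 ∈
      {r : ℝ | ∃ f : ZMod 3 → ℂ, IsAddCharComb (ZMod 3) f ∧ logMahler f = r ∧ 0 < r} :=
    ⟨_, witness_comb, witness_logMahler, hpos⟩
  refine le_antisymm (csInf_le ⟨0, fun r hr => ?_⟩ hmem) (le_csInf ⟨_, hmem⟩ ?_)
  · obtain ⟨g, _, _, hgpos⟩ := hr
    linarith
  · rintro r ⟨f, hf, hlmf, hrpos⟩
    obtain ⟨n, hn⟩ := sum_log_eq f hf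
    have hr' : r = (1/3) * Real.log n := by
      rw [← hlmf]
      unfold logMahler
      rw [hn, ZMod.card 3]
      norm_num
    have hlogpos : 0 < Real.log n := by rw [hr'] at hrpos; linarith
    have hn1 : (1:ℝ) < (n:ℝ) := by
      by_contra h
      push_neg at h
      exact absurd (Real.log_nonpos (by positivity) h) (not_le.mpr hlogpos)
    have hn2 : (2:ℝ) ≤ (n:ℝ) := by
      have h2 : 2 ≤ n := Nat.one_lt_cast.mp hn1
      exact_mod_cast h2
    have hle : Real.log 2 ≤ Real.log n := Real.log_le_log (by norm_num) hn2
    rw [hr']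
    linarith
end

section
/- The Lehmer constant of the cyclic group of order 4 is λ(ℤ/4ℤ) = (1/4) log 3. -/
open Finset Complex

namespace LehmerZMod4

lemma aux (P R Q T : ℤ)
    (h : max (P+R+Q+T).natAbs 1 * max (P+R-Q-T).natAbs 1 * max ((P-R)^2+(Q-T)^2).toNat 1 = 2) :
    False := by
  obtain ⟨A, hA⟩ : ∃ A : ℤ, A = P+R+Q+T := ⟨_, rfl⟩
  obtain ⟨B, hB⟩ : ∃ B : ℤ, B = P+R-Q-T := ⟨_, rfl⟩
  obtain ⟨C, hCdef⟩ : ∃ C : ℤ, C = (P-R)^2+(Q-T)^2 := ⟨_, rfl⟩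
  rw [← hA, ← hB, ← hCdef] at h
  have hCnn : 0 ≤ C := hCdef ▸ by positivity
  have hda : max A.natAbs 1 ≤ 2 :=
    Nat.le_of_dvd two_pos ⟨max B.natAbs 1 * max C.toNat 1, by rw [← h]; ring⟩
  have hdb : max B.natAbs 1 ≤ 2 :=
    Nat.le_of_dvd two_pos ⟨max A.natAbs 1 * max C.toNat 1, by rw [← h]; ring⟩
  have hdk : max C.toNat 1 ≤ 2 :=
    Nat.le_of_dvd two_pos ⟨max A.natAbs 1 * max B.natAbs 1, by rw [← h]; ring⟩
  have hC2 : C ≤ 2 := by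
    by_contra hc
    have h3 : (3:ℕ) ≤ C.toNat := by omega
    have := le_max_left C.toNat 1
    omega
  have hu : -1 ≤ P - R ∧ P - R ≤ 1 := by
    constructor <;> nlinarith [sq_nonneg (Q-T), sq_nonneg (P-R), hCdef ▸ hC2]
  have hv : -1 ≤ Q - T ∧ Q - T ≤ 1 := by
    constructor <;> nlinarith [sq_nonneg (Q-T), sq_nonneg (P-R), hCdef ▸ hC2]
  have hu3 : P - R = -1 ∨ P - R = 0 ∨ P - R = 1 := by omega
  have hv3 : Q - T = -1 ∨ Q - T = 0 ∨ Q - T = 1 := by omega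
  have hA3 : A.natAbs = 0 ∨ A.natAbs = 1 ∨ A.natAbs = 2 := by
    have := le_max_left A.natAbs 1; omega
  have hB3 : B.natAbs = 0 ∨ B.natAbs = 1 ∨ B.natAbs = 2 := by
    have := le_max_left B.natAbs 1; omega
  rcases hu3 with h1|h1|h1 <;> rcases hv3 with h2|h2|h2 <;>
    rw [h1, h2] at hCdef <;> norm_num at hCdef <;>
    rcases hA3 with h3|h3|h3 <;> rcases hB3 with h4|h4|h4 <;>
    rw [h3, h4, hCdef] at h <;> norm_num at h <;> omega

lemma hval (χ : AddChar (ZMod 4) Circle) (x : ZMod 4) : (χ x : ℂ) = (χ 1 : ℂ) ^ x.val := by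
  have hx : x = x.val • (1 : ZMod 4) := by
    rw [nsmul_eq_mul, mul_one]
    exact (ZMod.natCast_rightInverse x).symm
  have h1 : χ x = χ 1 ^ x.val := by
    conv_lhs => rw [hx]
    exact AddChar.map_nsmul_eq_pow χ _ _
  rw [h1, Circle.coe_pow]

lemma hchar4 (χ : AddChar (ZMod 4) Circle) : (χ 1 : ℂ) ^ 4 = 1 := by
  have h0 : (4:ℕ) • (1 : ZMod 4) = 0 := by decide
  have h1 : χ 1 ^ 4 = 1 := by
    rw [← AddChar.map_nsmul_eq_pow, h0, AddChar.map_zero_eq_one]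
  rw [← Circle.coe_pow, h1, Circle.coe_one]

lemma hroot (z : ℂ) (hz : z ^ 4 = 1) : z = 1 ∨ z = -1 ∨ z = I ∨ z = -I := by
  have h : (z - 1) * (z + 1) * (z - I) * (z + I) = 0 := by
    linear_combination hz + (1 - z^2) * Complex.I_sq
  rcases mul_eq_zero.1 h with h' | h'
  · rcases mul_eq_zero.1 h' with h'' | h''
    · rcases mul_eq_zero.1 h'' with h3 | h3
      · left; exact sub_eq_zero.1 h3
      · right; left; linear_combination h3
    · right; right; left; linear_combination h''
  · right; right; right; linear_combination h'

lemma decomp (s : Finset (AddChar (ZMod 4) Circle)) (c : AddChar (ZMod 4) Circle → ℤ) :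
    ∃ P R Q T : ℤ, ∀ x : ZMod 4,
      ∑ χ ∈ s, (c χ : ℂ) * (χ x : ℂ)
        = (P:ℂ) + (R:ℂ) * (-1:ℂ) ^ x.val + (Q:ℂ) * I ^ x.val + (T:ℂ) * (-I) ^ x.val := by
  classical
  refine ⟨∑ χ ∈ s.filter fun χ => (χ 1:ℂ) = 1, c χ,
          ∑ χ ∈ s.filter fun χ => (χ 1:ℂ) = -1, c χ,
          ∑ χ ∈ s.filter fun χ => (χ 1:ℂ) = I, c χ,
          ∑ χ ∈ s.filter fun χ => (χ 1:ℂ) = -I, c χ, fun x => ?_⟩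
  have hmap : ∀ χ ∈ s, (χ 1:ℂ) ∈ ({1, -1, I, -I} : Finset ℂ) := by
    intro χ _
    simp only [Finset.mem_insert, Finset.mem_singleton]
    exact hroot _ (hchar4 χ)
  have step1 : ∑ χ ∈ s, (c χ:ℂ) * (χ x:ℂ) = ∑ χ ∈ s, (c χ:ℂ) * (χ 1:ℂ)^x.val := by
    refine Finset.sum_congr rfl fun χ _ => by rw [hval]
  rw [step1, ← Finset.sum_fiberwise_of_maps_to hmap (fun χ => (c χ:ℂ) * (χ 1:ℂ)^x.val)]
  have step2 : ∀ u : ℂ, ∑ χ ∈ s.filter (fun χ => (χ 1:ℂ) = u), (c χ:ℂ) * (χ 1:ℂ)^x.val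
      = ((∑ χ ∈ s.filter (fun χ => (χ 1:ℂ) = u), c χ : ℤ) : ℂ) * u^x.val := by
    intro u
    push_cast
    rw [Finset.sum_mul]
    exact Finset.sum_congr rfl fun χ hχ => by rw [(Finset.mem_filter.1 hχ).2]
  rw [Finset.sum_insert (by norm_num [Complex.ext_iff]),
      Finset.sum_insert (by norm_num [Complex.ext_iff]),
      Finset.sum_insert (by norm_num [Complex.ext_iff]),
      Finset.sum_singleton, step2, step2, step2, step2]
  ring

lemma log_int_abs (A : ℤ) : Real.log |(A:ℝ)| = Real.log (max A.natAbs 1 : ℕ) := by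
  rcases eq_or_ne A 0 with h | h
  · simp [h]
  · have h2 : max A.natAbs 1 = A.natAbs := max_eq_left (by omega)
    rw [h2]
    congr 1
    rw [Nat.cast_natAbs, Int.cast_abs]

lemma log_int_toNat (C : ℤ) (hC : 0 ≤ C) : Real.log (C:ℝ) = Real.log (max C.toNat 1 : ℕ) := by
  rcases eq_or_ne C 0 with h | h
  · simp [h]
  · have h2 : max C.toNat 1 = C.toNat := max_eq_left (by omega)
    rw [h2]
    congr 1
    exact_mod_cast (Int.toNat_of_nonneg hC).symm

lemma lower_bound {r : ℝ} (f : ZMod 4 → ℂ) (hf : IsAddCharComb (ZMod 4) f)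
    (hm : logMahler f = r) (hr : 0 < r) : (1/4) * Real.log 3 ≤ r := by
  obtain ⟨s, c, hfdef⟩ := hf
  obtain ⟨P, R, Q, T, hPT⟩ := decomp s c
  have hf0 : f 0 = ((P + R + Q + T : ℤ) : ℂ) := by
    have := hPT 0
    rw [show (0 : ZMod 4).val = 0 from rfl] at this
    simp only [hfdef]; rw [this]; push_cast; ring
  have hf1 : f 1 = ((P - R : ℤ) : ℂ) + ((Q - T : ℤ) : ℂ) * I := by
    have := hPT 1
    rw [show (1 : ZMod 4).val = 1 from rfl] at this
    simp only [hfdef]; rw [this]; push_cast; ring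
  have hf2 : f 2 = ((P + R - Q - T : ℤ) : ℂ) := by
    have := hPT 2
    rw [show (2 : ZMod 4).val = 2 from rfl] at this
    simp only [hfdef]; rw [this]; push_cast
    simp [pow_two, Complex.I_mul_I]
    ring
  have hf3 : f 3 = ((P - R : ℤ) : ℂ) - ((Q - T : ℤ) : ℂ) * I := by
    have := hPT 3
    rw [show (3 : ZMod 4).val = 3 from rfl] at this
    simp only [hfdef]; rw [this]; push_cast
    simp [pow_succ, Complex.I_mul_I]
    ring
  -- absolute values
  have habs0 : ‖f 0‖ = |((P + R + Q + T : ℤ) : ℝ)| := by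
    rw [hf0, Complex.norm_intCast]
  have habs2 : ‖f 2‖ = |((P + R - Q - T : ℤ) : ℝ)| := by
    rw [hf2, Complex.norm_intCast]
  have hCnn : (0:ℝ) ≤ (((P-R)^2 + (Q-T)^2 : ℤ) : ℝ) := by positivity
  have habs1 : ‖f 1‖ = Real.sqrt (((P-R)^2 + (Q-T)^2 : ℤ) : ℝ) := by
    rw [hf1, Complex.norm_def]
    congr 1
    simp [Complex.normSq_apply]
    ring
  have habs3 : ‖f 3‖ = Real.sqrt (((P-R)^2 + (Q-T)^2 : ℤ) : ℝ) := by
    rw [hf3, Complex.norm_def]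
    congr 1
    simp [Complex.normSq_apply]
    ring
  -- the sum of logs
  have hsum : ∑ x : ZMod 4, Real.log (‖f x‖)
      = Real.log (max (P+R+Q+T).natAbs 1 * max (P+R-Q-T).natAbs 1
          * max ((P-R)^2+(Q-T)^2).toNat 1 : ℕ) := by
    have e : ∑ x : ZMod 4, Real.log (‖f x‖)
        = Real.log (‖f 0‖) + Real.log (‖f 1‖)
          + Real.log (‖f 2‖) + Real.log (‖f 3‖) :=
      Fin.sum_univ_four _
    rw [e]
    rw [habs0, habs1, habs2, habs3]
    rw [Real.log_sqrt hCnn, log_int_abs, log_int_abs, log_int_toNat _ (by positivity)]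
    push_cast
    rw [Real.log_mul (by positivity) (by positivity), Real.log_mul (by positivity) (by positivity)]
    ring
  set N : ℕ := max (P+R+Q+T).natAbs 1 * max (P+R-Q-T).natAbs 1
      * max ((P-R)^2+(Q-T)^2).toNat 1 with hNdef
  have hN1 : 1 ≤ N := by
    have a1 := le_max_right (P+R+Q+T).natAbs 1
    have a2 := le_max_right (P+R-Q-T).natAbs 1
    have a3 := le_max_right ((P-R)^2+(Q-T)^2).toNat 1
    calc 1 = 1 * 1 * 1 := by norm_num
    _ ≤ N := by rw [hNdef]; gcongr
  have hrN : r = (1/4) * Real.log N := by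
    rw [← hm, logMahler, ZMod.card, hsum]
    norm_num
  have hN2 : 2 ≤ N := by
    by_contra hc
    have h1 : N = 1 := by omega
    rw [h1] at hrN
    simp at hrN
    linarith
  have hN3 : 3 ≤ N := by
    rcases Nat.lt_or_ge N 3 with h | h
    · exfalso
      have h2 : N = 2 := by omega
      exact aux P R Q T (hNdef ▸ h2)
    · exact h
  have h3R : (3:ℝ) ≤ (N:ℝ) := by exact_mod_cast hN3
  have hlog3 : Real.log 3 ≤ Real.log N := Real.log_le_log (by norm_num) h3R
  rw [hrN]
  linarith

noncomputable def iC : Circle := ⟨Complex.I, by simp [Submonoid.unitSphere]⟩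

lemma iC_coe : (iC : ℂ) = Complex.I := rfl

lemma iC_pow : iC ^ 4 = 1 := by
  ext
  rw [Circle.coe_pow, iC_coe]
  simp [pow_succ, Complex.I_mul_I]

noncomputable def chi : AddChar (ZMod 4) Circle := AddChar.zmodChar 4 iC_pow

lemma chi_coe (x : ZMod 4) : (chi x : ℂ) = I ^ x.val := by
  rw [chi, AddChar.zmodChar_apply, Circle.coe_pow, iC_coe]

lemma chi2_coe (x : ZMod 4) : ((chi * chi) x : ℂ) = I ^ x.val * I ^ x.val := by
  rw [AddChar.mul_apply, Circle.coe_mul, chi_coe]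

lemma one_ne_chi : (1 : AddChar (ZMod 4) Circle) ≠ chi := by
  intro h
  have h2 := congrArg (fun ψ : AddChar (ZMod 4) Circle => (ψ 1 : ℂ)) h
  simp only [AddChar.one_apply, chi_coe, show (1 : ZMod 4).val = 1 from rfl, pow_one] at h2
  rw [Circle.coe_one] at h2
  norm_num [Complex.ext_iff] at h2

lemma one_ne_chi2 : (1 : AddChar (ZMod 4) Circle) ≠ chi * chi := by
  intro h
  have h2 := congrArg (fun ψ : AddChar (ZMod 4) Circle => (ψ 1 : ℂ)) h
  simp only [AddChar.one_apply, chi2_coe, show (1 : ZMod 4).val = 1 from rfl, pow_one,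
    Complex.I_mul_I] at h2
  rw [Circle.coe_one] at h2
  norm_num [Complex.ext_iff] at h2

lemma chi_ne_chi2 : chi ≠ chi * chi := by
  intro h
  have h2 := congrArg (fun ψ : AddChar (ZMod 4) Circle => (ψ 1 : ℂ)) h
  simp only [chi_coe, chi2_coe, show (1 : ZMod 4).val = 1 from rfl, pow_one,
    Complex.I_mul_I] at h2
  norm_num [Complex.ext_iff] at h2

lemma mem_aux : ∃ f : ZMod 4 → ℂ, IsAddCharComb (ZMod 4) f ∧
    logMahler f = (1/4) * Real.log 3 ∧ (0:ℝ) < (1/4) * Real.log 3 := by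
  classical
  refine ⟨fun x => ∑ χ ∈ ({1, chi, chi * chi} : Finset (AddChar (ZMod 4) Circle)),
      (((fun _ => 1) : AddChar (ZMod 4) Circle → ℤ) χ : ℂ) * (χ x : ℂ),
    ⟨_, _, rfl⟩, ?_, ?_⟩
  · have hv : ∀ x : ZMod 4,
        ∑ χ ∈ ({1, chi, chi * chi} : Finset (AddChar (ZMod 4) Circle)),
          (((fun _ => 1) : AddChar (ZMod 4) Circle → ℤ) χ : ℂ) * (χ x : ℂ)
        = 1 + I ^ x.val + I ^ x.val * I ^ x.val := by
      intro x
      have hmem1 : (1 : AddChar (ZMod 4) Circle) ∉ ({chi, chi * chi} : Finset _) := by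
        simp only [Finset.mem_insert, Finset.mem_singleton]
        rintro (h | h)
        exacts [one_ne_chi h, one_ne_chi2 h]
      have hmem2 : chi ∉ ({chi * chi} : Finset (AddChar (ZMod 4) Circle)) := by
        simp only [Finset.mem_singleton]
        exact chi_ne_chi2
      rw [Finset.sum_insert hmem1, Finset.sum_insert hmem2, Finset.sum_singleton]
      simp only [AddChar.one_apply, chi_coe, chi2_coe, Circle.coe_one, Int.cast_one, one_mul]
      ring
    rw [logMahler, ZMod.card]
    have e : ∀ g : ZMod 4 → ℝ, ∑ x : ZMod 4, g x = g 0 + g 1 + g 2 + g 3 :=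
      fun g => Fin.sum_univ_four g
    rw [e]
    simp only [hv, show (0 : ZMod 4).val = 0 from rfl, show (1 : ZMod 4).val = 1 from rfl,
      show (2 : ZMod 4).val = 2 from rfl, show (3 : ZMod 4).val = 3 from rfl]
    have e0 : (1 : ℂ) + I ^ 0 + I ^ 0 * I ^ 0 = 3 := by norm_num
    have e1 : (1 : ℂ) + I ^ 1 + I ^ 1 * I ^ 1 = I := by
      simp [Complex.I_mul_I]
    have e2 : (1 : ℂ) + I ^ 2 + I ^ 2 * I ^ 2 = 1 := by
      simp [pow_two, Complex.I_mul_I]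
    have e3 : (1 : ℂ) + I ^ 3 + I ^ 3 * I ^ 3 = -I := by
      simp [pow_succ, pow_two, Complex.I_mul_I]
    rw [e0, e1, e2, e3]
    rw [norm_one, norm_neg, Complex.norm_I]
    rw [show ‖(3:ℂ)‖ = 3 by norm_num [Complex.norm_ofNat]]
    norm_num
  · positivity

end LehmerZMod4

/-- Example 4.3: the Lehmer constant of `ℤ/4ℤ` is `(1/4) log 3`. -/
theorem lehmer_zmod_four : lehmer (ZMod 4) = (1 / 4) * Real.log 3 := by
  obtain ⟨f, hcomb, hlog, hpos⟩ := LehmerZMod4.mem_aux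
  have hlb : ∀ r ∈ {r : ℝ | ∃ f : ZMod 4 → ℂ, IsAddCharComb (ZMod 4) f ∧ logMahler f = r ∧ 0 < r},
      (1/4) * Real.log 3 ≤ r := by
    rintro r ⟨g, hg, hm, hr⟩
    exact LehmerZMod4.lower_bound g hg hm hr
  refine le_antisymm (csInf_le ⟨_, hlb⟩ ⟨f, hcomb, hlog, hpos⟩)
    (le_csInf ⟨_, ⟨f, hcomb, hlog, hpos⟩⟩ hlb)
end

section
/- For every integer n ≥ 2, the Lehmer constant of the cyclic group of order n satisfies λ(ℤ/nℤ) ≤ (1/n) log ρ(n), where ρ(n) is the smallest prime number not dividing n. -/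
open Finset

/-- `rho n` is the smallest prime number that does not divide `n`. -/
noncomputable def rho (n : ℕ) : ℕ := sInf {p : ℕ | p.Prime ∧ ¬ p ∣ n}

private lemma pow_mod_eq_pow {ζ : ℂ} {n : ℕ} (hζn : ζ ^ n = 1) {a b : ℕ}
    (h : a ≡ b [MOD n]) : ζ ^ a = ζ ^ b := by
  have key : ∀ k : ℕ, ζ ^ k = ζ ^ (k % n) := by
    intro k
    conv_lhs => rw [← Nat.div_add_mod k n]
    rw [pow_add, pow_mul, hζn, one_pow, one_mul]
  rw [key a, key b, h]

/-- Theorem 4.6: `λ(ℤ/nℤ) ≤ (1/n) log ρ(n)` for all `n ≥ 2`. -/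
theorem lehmer_zmod_le (n : ℕ) [NeZero n] (hn : 2 ≤ n) :
    lehmer (ZMod n) ≤ (1 / (n : ℝ)) * Real.log (rho n) := by
  classical
  have hn0 : (n : ℕ) ≠ 0 := NeZero.ne n
  -- basic facts about p := rho n
  have hne : {p : ℕ | p.Prime ∧ ¬ p ∣ n}.Nonempty := by
    obtain ⟨q, hq, hqp⟩ := Nat.exists_infinite_primes (n + 1)
    exact ⟨q, hqp, fun hd => absurd (Nat.le_of_dvd (by omega) hd) (by omega)⟩
  obtain ⟨hpprime, hpdvd⟩ : (rho n).Prime ∧ ¬ (rho n) ∣ n := Nat.sInf_mem hne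
  set p : ℕ := rho n with hpdef
  have hcop : Nat.Coprime p n := (Nat.Prime.coprime_iff_not_dvd hpprime).2 hpdvd
  -- the primitive root
  set ζ : ℂ := Complex.exp (2 * Real.pi * Complex.I / n) with hζdef
  have hζ : IsPrimitiveRoot ζ n := Complex.isPrimitiveRoot_exp n hn0
  have hζn : ζ ^ n = 1 := hζ.pow_eq_one
  have hζne : ∀ x : ZMod n, x ≠ 0 → ζ ^ x.val ≠ 1 := by
    intro x hx h
    have hdvd : n ∣ x.val := (IsPrimitiveRoot.pow_eq_one_iff_dvd hζ x.val).1 h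
    have hlt : x.val < n := ZMod.val_lt x
    have hv : x.val = 0 := Nat.eq_zero_of_dvd_of_lt hdvd hlt
    exact hx (by rwa [← ZMod.val_eq_zero])
  -- the character and the test function
  set χ : AddChar (ZMod n) Circle := ZMod.toCircle with hχdef
  have hχval : ∀ x : ZMod n, (χ x : ℂ) = ζ ^ x.val := by
    intro x
    rw [hχdef, ZMod.toCircle_apply, hζdef, ← Complex.exp_nat_mul]
    ring_nf
  set f : ZMod n → ℂ := fun x => ∑ j ∈ range p, (ζ ^ x.val) ^ j with hfdef
  -- f is an integer combination of characters
  have hcomb : IsAddCharComb (ZMod n) f := by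
    refine ⟨(range p).image (fun j => χ ^ j),
      fun ψ => ((((range p).filter fun j => χ ^ j = ψ)).card : ℤ), ?_⟩
    funext x
    have h1 : ∑ ψ ∈ (range p).image (fun j => χ ^ j),
        (((((range p).filter fun j => χ ^ j = ψ).card : ℤ)) : ℂ) * (ψ x : ℂ)
        = ∑ j ∈ range p, ((χ ^ j) x : ℂ) := by
      refine Finset.sum_image' _ (fun j hj => ?_)
      rw [Finset.sum_congr rfl (fun k hk => by
        rw [show (χ ^ k) = (χ ^ j) from (Finset.mem_filter.1 hk).2]),
        Finset.sum_const, nsmul_eq_mul]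
      push_cast
      ring
    rw [hfdef]
    simp only
    rw [h1]
    refine Finset.sum_congr rfl fun j _ => ?_
    rw [AddChar.pow_apply]
    have : ((χ x ^ j : Circle) : ℂ) = ((χ x : ℂ)) ^ j :=
      map_pow Circle.coeHom (χ x) j
    rw [this, hχval x]
  -- compute the product of f over all of ZMod n
  have hprod : ∏ x : ZMod n, f x = (p : ℂ) := by
    have h0mem : (0 : ZMod n) ∈ (univ : Finset (ZMod n)) := mem_univ 0
    rw [← Finset.mul_prod_erase univ f h0mem]
    have hf0 : f 0 = (p : ℂ) := by
      simp [hfdef, ZMod.val_zero]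
    rw [hf0]
    have hrest : ∏ x ∈ univ.erase (0 : ZMod n), f x = 1 := by
      have hform : ∀ x ∈ univ.erase (0 : ZMod n),
          f x = ((ζ ^ x.val) ^ p - 1) / (ζ ^ x.val - 1) := by
        intro x hx
        have hx0 : x ≠ 0 := (Finset.mem_erase.1 hx).1
        exact geom_sum_eq (hζne x hx0) p
      rw [Finset.prod_congr rfl hform, Finset.prod_div_distrib]
      have hnum : ∏ x ∈ univ.erase (0 : ZMod n), ((ζ ^ x.val) ^ p - 1)
          = ∏ x ∈ univ.erase (0 : ZMod n), (ζ ^ x.val - 1) := by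
        set u : (ZMod n)ˣ := ZMod.unitOfCoprime p hcop with hudef
        have hu : (u : ZMod n) = (p : ZMod n) := ZMod.coe_unitOfCoprime p hcop
        refine Finset.prod_nbij' (fun x => (u : ZMod n) * x)
          (fun y => ((u⁻¹ : (ZMod n)ˣ) : ZMod n) * y) ?_ ?_ ?_ ?_ ?_
        · intro a ha
          refine Finset.mem_erase.2 ⟨?_, mem_univ _⟩
          have ha0 : a ≠ 0 := (Finset.mem_erase.1 ha).1
          intro h
          apply ha0
          have := congrArg (fun z => ((u⁻¹ : (ZMod n)ˣ) : ZMod n) * z) h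
          simpa [← mul_assoc, ← Units.val_mul] using this
        · intro b hb
          refine Finset.mem_erase.2 ⟨?_, mem_univ _⟩
          have hb0 : b ≠ 0 := (Finset.mem_erase.1 hb).1
          intro h
          apply hb0
          have := congrArg (fun z => ((u : (ZMod n)ˣ) : ZMod n) * z) h
          simpa [← mul_assoc, ← Units.val_mul] using this
        · intro a _
          simp [← mul_assoc, ← Units.val_mul]
        · intro b _
          simp [← mul_assoc, ← Units.val_mul]
        · intro a _
          congr 1
          rw [← pow_mul, hu]
          refine pow_mod_eq_pow hζn ?_
          have h1 : ((p : ZMod n) * a).val = ((p % n) * a.val) % n := by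
            rw [ZMod.val_mul, ZMod.val_natCast]
          rw [h1]
          calc a.val * p ≡ p * a.val [MOD n] := by rw [Nat.mul_comm]
            _ ≡ (p % n) * a.val [MOD n] :=
                Nat.ModEq.mul_right _ (Nat.mod_modEq p n).symm
            _ ≡ ((p % n) * a.val) % n [MOD n] := (Nat.mod_modEq _ n).symm
      rw [hnum, div_self]
      refine Finset.prod_ne_zero_iff.2 fun x hx => ?_
      have hx0 : x ≠ 0 := (Finset.mem_erase.1 hx).1
      exact sub_ne_zero.2 (hζne x hx0)
    rw [hrest, mul_one]
  -- each value of f is nonzero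
  have hp0 : (p : ℂ) ≠ 0 := by
    exact_mod_cast hpprime.ne_zero
  have hfne : ∀ x : ZMod n, f x ≠ 0 := by
    intro x
    have := hprod
    by_contra h
    exact hp0 (by rw [← hprod, Finset.prod_eq_zero (mem_univ x) h])
  -- compute logMahler f
  have hlog : logMahler f = (1 / (n : ℝ)) * Real.log p := by
    unfold logMahler
    rw [ZMod.card n]
    congr 1
    rw [← Real.log_prod (fun x _ => norm_ne_zero_iff.mpr (hfne x))]
    rw [← norm_prod univ f, hprod]
    simp
  -- positivity
  have hrpos : 0 < (1 / (n : ℝ)) * Real.log p := by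
    apply mul_pos
    · positivity
    · exact Real.log_pos (by exact_mod_cast hpprime.one_lt)
  -- conclude
  refine csInf_le ⟨0, fun r hr => ?_⟩ ⟨f, hcomb, hlog, hrpos⟩
  obtain ⟨g, _, _, hgpos⟩ := hr
  linarith
end

section
/- The Lehmer constant of the Klein four-group is λ(ℤ/2ℤ ⊕ ℤ/2ℤ) = (1/4) log 3. -/
open Finset

namespace LehmerKlein

open scoped Classical

noncomputable section

abbrev G4 := ZMod 2 × ZMod 2

lemma sum4 {M : Type*} [AddCommMonoid M] (g : G4 → M) :
    ∑ x, g x = g (0,0) + g (1,0) + g (0,1) + g (1,1) := by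
  rw [Fintype.sum_prod_type]
  rw [show (Finset.univ : Finset (ZMod 2)) = {0, 1} from by decide,
    Finset.sum_pair (by decide), Finset.sum_pair (by decide), Finset.sum_pair (by decide)]
  abel

lemma prod4 {M : Type*} [CommMonoid M] (g : G4 → M) :
    ∏ x, g x = g (0,0) * g (1,0) * g (0,1) * g (1,1) := by
  rw [Fintype.prod_prod_type]
  rw [show (Finset.univ : Finset (ZMod 2)) = {0, 1} from by decide,
    Finset.prod_pair (by decide), Finset.prod_pair (by decide), Finset.prod_pair (by decide)]
  rw [mul_mul_mul_comm, ← mul_assoc]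

lemma card4 : (Fintype.card G4 : ℝ) = 4 := by
  simp

lemma char_pm (χ : AddChar G4 Circle) (x : G4) : (χ x : ℂ) = 1 ∨ (χ x : ℂ) = -1 := by
  have hx : x + x = 0 := by revert x; decide
  have h : (χ x : ℂ) * (χ x : ℂ) = 1 := by
    rw [← Circle.coe_mul, ← AddChar.map_add_eq_mul, hx, AddChar.map_zero_eq_one, Circle.coe_one]
  exact mul_self_eq_one_iff.mp h

/-- The sign of `χ x` as an integer. -/
def eps (χ : AddChar G4 Circle) (x : G4) : ℤ :=
  if (χ x : ℂ) = 1 then 1 else -1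

lemma eps_cast (χ : AddChar G4 Circle) (x : G4) : ((eps χ x : ℤ) : ℂ) = (χ x : ℂ) := by
  rcases char_pm χ x with h | h
  · rw [eps, if_pos h, h]; norm_num
  · rw [eps, if_neg (by rw [h]; norm_num), h]; norm_num

lemma eps_pm (χ : AddChar G4 Circle) (x : G4) : eps χ x = 1 ∨ eps χ x = -1 := by
  unfold eps; split <;> simp

lemma eps_zero (χ : AddChar G4 Circle) : eps χ 0 = 1 := by
  simp [eps]

lemma eps_add (χ : AddChar G4 Circle) (x y : G4) : eps χ (x + y) = eps χ x * eps χ y := by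
  have : ((eps χ (x + y) : ℤ) : ℂ) = ((eps χ x * eps χ y : ℤ) : ℂ) := by
    push_cast
    rw [eps_cast, eps_cast, eps_cast, AddChar.map_add_eq_mul, Circle.coe_mul]
  exact_mod_cast this

/-- The key combinatorial fact: integer tuples satisfying the parity and sum
divisibility constraints cannot have "Mahler product" equal to `2`. -/
lemma key (p1 p2 p3 p4 : ℤ) (h12 : 2 ∣ p1 - p2) (h13 : 2 ∣ p1 - p3) (h14 : 2 ∣ p1 - p4)
    (hs : 4 ∣ p1 + p2 + p3 + p4) :
    max p1.natAbs 1 * max p2.natAbs 1 * max p3.natAbs 1 * max p4.natAbs 1 ≠ 2 := by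
  intro h
  set m1 := max p1.natAbs 1 with hm1
  set m2 := max p2.natAbs 1 with hm2
  set m3 := max p3.natAbs 1 with hm3
  set m4 := max p4.natAbs 1 with hm4
  have d1 : m1 ∣ 2 := ⟨m2 * m3 * m4, by rw [← h]; ring⟩
  have d2 : m2 ∣ 2 := ⟨m1 * m3 * m4, by rw [← h]; ring⟩
  have d3 : m3 ∣ 2 := ⟨m1 * m2 * m4, by rw [← h]; ring⟩
  have d4 : m4 ∣ 2 := ⟨m1 * m2 * m3, by rw [← h]; ring⟩
  have e1 : m1 = 1 ∨ m1 = 2 := by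
    have := Nat.le_of_dvd (by norm_num) d1; omega
  have e2 : m2 = 1 ∨ m2 = 2 := by
    have := Nat.le_of_dvd (by norm_num) d2; omega
  have e3 : m3 = 1 ∨ m3 = 2 := by
    have := Nat.le_of_dvd (by norm_num) d3; omega
  have e4 : m4 = 1 ∨ m4 = 2 := by
    have := Nat.le_of_dvd (by norm_num) d4; omega
  rcases e1 with e1 | e1 <;> rcases e2 with e2 | e2 <;> rcases e3 with e3 | e3 <;>
    rcases e4 with e4 | e4 <;> rw [e1, e2, e3, e4] at h <;> omega

/-- Lower bound: any positive Mahler measure is at least `(1/4) log 3`. -/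
lemma lower_bound {f : G4 → ℂ} (hf : IsAddCharComb G4 f) (hpos : 0 < logMahler f) :
    (1 / 4) * Real.log 3 ≤ logMahler f := by
  obtain ⟨s, c, rfl⟩ := hf
  set F : G4 → ℂ := fun x => ∑ χ ∈ s, (c χ : ℂ) * (χ x : ℂ) with hF
  set n : G4 → ℤ := fun x => ∑ χ ∈ s, c χ * eps χ x with hn
  have hfn : ∀ x, F x = ((n x : ℤ) : ℂ) := by
    intro x
    rw [hF, hn]
    push_cast
    exact Finset.sum_congr rfl fun χ _ => by rw [eps_cast]
  -- parity
  have hpar : ∀ x y : G4, 2 ∣ n x - n y := by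
    intro x y
    rw [hn]
    simp only
    rw [← Finset.sum_sub_distrib]
    refine Finset.dvd_sum fun χ _ => ?_
    have : c χ * eps χ x - c χ * eps χ y = c χ * (eps χ x - eps χ y) := by ring
    rw [this]
    rcases eps_pm χ x with h1 | h1 <;> rcases eps_pm χ y with h2 | h2 <;>
      rw [h1, h2] <;> simp <;> omega
  -- sum divisibility
  have hsum : (4 : ℤ) ∣ ∑ x, n x := by
    rw [hn]
    simp only
    rw [Finset.sum_comm]
    refine Finset.dvd_sum fun χ _ => ?_
    rw [← Finset.mul_sum]
    refine Dvd.dvd.mul_left ?_ _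
    rw [sum4 (fun x => eps χ x)]
    have h11 : eps χ (1,1) = eps χ (1,0) * eps χ (0,1) := by
      rw [← eps_add]; norm_num
    rw [show ((0,0) : G4) = 0 from rfl, eps_zero, h11]
    rcases eps_pm χ (1,0) with h1 | h1 <;> rcases eps_pm χ (0,1) with h2 | h2 <;>
      rw [h1, h2] <;> decide
  -- rewrite logMahler in terms of N
  set M : G4 → ℕ := fun x => max (n x).natAbs 1 with hM
  have hlogx : ∀ x, Real.log ‖F x‖ = Real.log (M x) := by
    intro x
    rw [hfn x, hM]
    simp only
    rcases eq_or_ne (n x) 0 with h | h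
    · simp [h]
    · rw [max_eq_left (by have := Int.natAbs_pos.mpr h; omega)]
      rw [Complex.norm_intCast]
      congr 1
      rw [← Int.cast_abs]
      exact (Nat.cast_natAbs (n x)).symm
  set N : ℕ := ∏ x, M x with hN
  have hMpos : ∀ x : G4, (0 : ℝ) < (M x : ℝ) := by
    intro x; rw [hM]; positivity
  have hNlog : logMahler F = (1 / 4) * Real.log N := by
    unfold logMahler
    rw [card4]
    congr 1
    rw [hN]
    push_cast
    rw [Real.log_prod (fun x _ => ne_of_gt (hMpos x))]
    exact Finset.sum_congr rfl fun x _ => hlogx x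
  have hN1 : 1 ≤ N := by
    rw [hN]
    exact Finset.one_le_prod' fun x _ => le_max_right _ _
  have hN2 : 2 ≤ N := by
    rcases Nat.lt_or_ge N 2 with hc | hc
    · exfalso
      have hNeq : N = 1 := by omega
      rw [hNeq] at hNlog
      rw [hNlog] at hpos
      norm_num at hpos
    · exact hc
  have hNne2 : N ≠ 2 := by
    rw [hN, prod4 M, hM]
    simp only
    exact key (n (0,0)) (n (1,0)) (n (0,1)) (n (1,1))
      (hpar _ _) (hpar _ _) (hpar _ _)
      (by have := hsum; rwa [sum4 n] at this)
  have hN3 : 3 ≤ N := by omega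
  rw [hNlog]
  have : Real.log 3 ≤ Real.log N := by
    apply Real.log_le_log (by norm_num)
    exact_mod_cast hN3
  linarith

/-- `-1` as an element of the circle. -/
def mone : Circle := ⟨-1, by simp [Submonoid.unitSphere]⟩

@[simp] lemma coe_mone : (mone : ℂ) = -1 := rfl

lemma mone_sq : mone ^ 2 = 1 := by
  ext
  rw [sq]
  simp

def χone : AddChar (ZMod 2) Circle := AddChar.zmodChar 2 mone_sq

lemma χone_coe : ∀ a : ZMod 2, ((χone a : ℂ)) = if a = 0 then 1 else -1 := by
  intro a
  have : a = 0 ∨ a = 1 := by revert a; decide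
  rcases this with rfl | rfl
  · simp
  · rw [χone, AddChar.zmodChar_apply]
    norm_num
    rw [show (1 : ZMod 2).val = 1 from rfl]
    simp

def χ1 : AddChar G4 Circle := χone.compAddMonoidHom (AddMonoidHom.fst _ _)
def χ2 : AddChar G4 Circle := χone.compAddMonoidHom (AddMonoidHom.snd _ _)
def χ3 : AddChar G4 Circle := χ1 * χ2

lemma χ1_coe (a b : ZMod 2) : ((χ1 (a, b) : ℂ)) = if a = 0 then 1 else -1 := by
  rw [χ1, AddChar.compAddMonoidHom_apply]; exact χone_coe a

lemma χ2_coe (a b : ZMod 2) : ((χ2 (a, b) : ℂ)) = if b = 0 then 1 else -1 := by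
  rw [χ2, AddChar.compAddMonoidHom_apply]; exact χone_coe b

lemma χ3_coe (a b : ZMod 2) : ((χ3 (a, b) : ℂ)) =
    (if a = 0 then 1 else -1) * (if b = 0 then 1 else -1) := by
  rw [χ3, AddChar.mul_apply, Circle.coe_mul, χ1_coe, χ2_coe]

lemma hne10 : (1 : ZMod 2) ≠ 0 := by decide

lemma χ12 : χ1 ≠ χ2 := by
  intro h
  have := congrArg (fun ψ : AddChar G4 Circle => (ψ (1, 0) : ℂ)) h
  simp only [χ1_coe, χ2_coe, if_pos rfl, if_neg hne10] at this
  norm_num at this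

lemma χ13 : χ1 ≠ χ3 := by
  intro h
  have := congrArg (fun ψ : AddChar G4 Circle => (ψ (0, 1) : ℂ)) h
  simp only [χ1_coe, χ3_coe, if_pos rfl, if_neg hne10] at this
  norm_num at this

lemma χ23 : χ2 ≠ χ3 := by
  intro h
  have := congrArg (fun ψ : AddChar G4 Circle => (ψ (1, 0) : ℂ)) h
  simp only [χ2_coe, χ3_coe, if_pos rfl, if_neg hne10] at this
  norm_num at this

/-- Witness coefficient function. -/
def cw : AddChar G4 Circle → ℤ := fun χ => if χ = χ3 then -1 else 1

/-- The witness polynomial `f₀ = χ1 + χ2 - χ3`, with values `(1,1,1,-3)`. -/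
def f₀ : G4 → ℂ := fun x =>
  ∑ χ ∈ ({χ1, χ2, χ3} : Finset (AddChar G4 Circle)), (cw χ : ℂ) * (χ x : ℂ)

lemma f₀_comb : IsAddCharComb G4 f₀ := ⟨{χ1, χ2, χ3}, cw, rfl⟩

lemma f₀_eval (x : G4) : f₀ x = (χ1 x : ℂ) + (χ2 x : ℂ) - (χ3 x : ℂ) := by
  rw [f₀]
  rw [Finset.sum_insert (by simp [χ12, χ13]), Finset.sum_insert (by simp [χ23]),
    Finset.sum_singleton]
  simp only [cw, if_pos rfl, if_neg χ13, if_neg χ23]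
  push_cast
  ring

lemma f₀_values : f₀ (0,0) = 1 ∧ f₀ (1,0) = 1 ∧ f₀ (0,1) = 1 ∧ f₀ (1,1) = -3 := by
  have hne : (1 : ZMod 2) ≠ 0 := by decide
  refine ⟨?_, ?_, ?_, ?_⟩ <;>
    simp only [f₀_eval, χ1_coe, χ2_coe, χ3_coe, if_pos rfl, if_neg hne] <;> (try norm_num)

lemma f₀_logMahler : logMahler f₀ = (1 / 4) * Real.log 3 := by
  unfold logMahler
  rw [card4, sum4 (fun x => Real.log ‖f₀ x‖)]
  obtain ⟨h1, h2, h3, h4⟩ := f₀_values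
  rw [h1, h2, h3, h4]
  simp only [norm_one, Real.log_one]
  rw [show ‖(-3 : ℂ)‖ = 3 by simp]
  ring

end

end LehmerKlein

/-- Example 4.8: the Lehmer constant of the Klein four-group `ℤ/2ℤ ⊕ ℤ/2ℤ` is
`(1/4) log 3`. -/
theorem lehmer_klein_four : lehmer (ZMod 2 × ZMod 2) = (1 / 4) * Real.log 3 := by
  unfold lehmer
  have hmem : (1 / 4 : ℝ) * Real.log 3 ∈
      {r : ℝ | ∃ f : ZMod 2 × ZMod 2 → ℂ, IsAddCharComb _ f ∧ logMahler f = r ∧ 0 < r} := by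
    refine ⟨LehmerKlein.f₀, LehmerKlein.f₀_comb, LehmerKlein.f₀_logMahler, ?_⟩
    have : (0:ℝ) < Real.log 3 := Real.log_pos (by norm_num)
    linarith
  have hlb : ∀ r ∈ {r : ℝ | ∃ f : ZMod 2 × ZMod 2 → ℂ,
      IsAddCharComb _ f ∧ logMahler f = r ∧ 0 < r}, (1 / 4 : ℝ) * Real.log 3 ≤ r := by
    rintro r ⟨f, hf, rfl, hpos⟩
    exact LehmerKlein.lower_bound hf hpos
  exact le_antisymm (csInf_le ⟨_, hlb⟩ hmem) (le_csInf ⟨_, hmem⟩ hlb)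
end
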